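/- For a real number α and a nonzero integer k, define p_5(α, k) := 16(√3 − 1) − [8√3 + 16 + (2 + 4√3)/k²] α + [34 − 6√3 + (24k² + 1)/(2k⁴)] α² − [4√3 − 1 + √3/k²] α³. Then for all α ∈ [0, 1/3] and all integers k with |k| ≥ 1: p_5(α, k) ≥ p_5(α, 1) ≥ 5/2. -/
import Mathlib


open Real

/-- The polynomial `p₅(α,k) = δ₅(k,α,α)/α²` from the hypocoercivity analysis of the
linearized BGK equation. -/
noncomputable def p5 (α : ℝ) (k : ℤ) : ℝ :=
  16 * (Real.sqrt 3 - 1)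
    - (8 * Real.sqrt 3 + 16 + (2 + 4 * Real.sqrt 3) / (k : ℝ) ^ 2) * α
    + (34 - 6 * Real.sqrt 3 + (24 * (k : ℝ) ^ 2 + 1) / (2 * (k : ℝ) ^ 4)) * α ^ 2
    - (4 * Real.sqrt 3 - 1 + Real.sqrt 3 / (k : ℝ) ^ 2) * α ^ 3

lemma sqrt3_lb : (1.7320508 : ℝ) ≤ Real.sqrt 3 := by
  have : ((1.7320508 : ℝ)) ^ 2 ≤ 3 := by norm_num
  nlinarith [Real.sq_sqrt (by norm_num : (3:ℝ) ≥ 0), Real.sqrt_nonneg 3]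

lemma sqrt3_ub : Real.sqrt 3 ≤ (1.7320509 : ℝ) := by
  nlinarith [Real.sq_sqrt (by norm_num : (3:ℝ) ≥ 0), Real.sqrt_nonneg 3]

/-- for all `α ∈ [0, 1/3]` and all integers `k` with `|k| ≥ 1`,
`p₅(α,k) ≥ p₅(α,1) ≥ 5/2`. -/
theorem stmt_17 :
    ∀ α : ℝ, α ∈ Set.Icc (0:ℝ) (1/3) → ∀ k : ℤ, 1 ≤ |k| →
      p5 α 1 ≤ p5 α k ∧ 5/2 ≤ p5 α 1 := by
  intro α hα k hk
  obtain ⟨hα0, hα3⟩ := hα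
  set s := Real.sqrt 3 with hs
  have hs2 : s ^ 2 = 3 := Real.sq_sqrt (by norm_num)
  have hsl : (1.7320508 : ℝ) ≤ s := sqrt3_lb
  have hsu : s ≤ (1.7320509 : ℝ) := sqrt3_ub
  have hk2 : (1:ℤ) ≤ k ^ 2 := by nlinarith [sq_abs k, hk]
  have hx : (1:ℝ) ≤ (k : ℝ) ^ 2 := by exact_mod_cast hk2
  have hx0 : (0:ℝ) < (k : ℝ) ^ 2 := by linarith
  have hkne : ((k : ℝ)) ≠ 0 := by
    intro h; rw [h] at hx0; norm_num at hx0
  have hu1 : 1 / (k : ℝ) ^ 2 ≤ 1 := by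
    rw [div_le_one hx0]; exact hx
  have hu0 : 0 < 1 / (k : ℝ) ^ 2 := by positivity
  constructor
  · have key : p5 α k - p5 α 1 =
        (1 - 1/(k:ℝ)^2) * ((2 + 4*s) * α + s * α ^ 3 - (1/(k:ℝ)^2 + 25) / 2 * α ^ 2) := by
      simp only [p5]
      push_cast
      field_simp
      ring
    have h1 : 0 ≤ 1 - 1/(k:ℝ)^2 := by linarith
    have h2 : 0 ≤ (2 + 4*s) * α + s * α ^ 3 - (1/(k:ℝ)^2 + 25) / 2 * α ^ 2 := by
      nlinarith [mul_nonneg hα0 (by nlinarith : (0:ℝ) ≤ 2 + 4*s - 13*α),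
        mul_nonneg (mul_nonneg hα0 hα0) hα0, sq_nonneg α,
        mul_nonneg (sq_nonneg α) (le_of_lt hu0)]
    nlinarith [mul_nonneg h1 h2]
  · have h1 : p5 α 1 = 16*s - 16 - (12*s + 18)*α + (93/2 - 6*s)*α^2 - (5*s - 1)*α^3 := by
      simp only [p5]
      norm_num
      ring
    rw [h1]
    nlinarith [mul_nonneg (sub_nonneg.2 hα3) (sub_nonneg.2 hα3), sq_nonneg (α - 1/3),
      mul_nonneg (mul_nonneg (sub_nonneg.2 hα3) (sub_nonneg.2 hα3)) hα0,
      mul_nonneg (sq_nonneg (α - 1/3)) (by linarith : (0:ℝ) ≤ s - 1)]
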